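/- Let Φ be continuous, positive, T-periodic with mean Φ̄ and suppose 0 < σ̃ < Φ̄. Then the ODE R'(t) = μ R(t)(Φ(t) P₀(R(t)) − σ̃/3) admits a positive T-periodic solution R* (i.e., a solution with R*(0) = R*(T) > 0). -/

import Mathlib

noncomputable def P0 (x : ℝ) : ℝ := (x * (Real.cosh x / Real.sinh x) - 1) / x ^ 2

open Real Set Topology Filter

set_option maxHeartbeats 2000000




/-- helper: nonneg functions from deriv nonneg -/
lemma aux_nonneg_of_deriv {f f' : ℝ → ℝ} (hf : ∀ t, HasDerivAt f (f' t) t)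
    (h0 : 0 ≤ f 0) {r : ℝ} (hf' : ∀ t ∈ Ioo (0:ℝ) r, 0 ≤ f' t) :
    ∀ x ∈ Icc (0:ℝ) r, 0 ≤ f x := by
  intro x hx
  have hmono : MonotoneOn f (Icc (0:ℝ) r) := by
    apply monotoneOn_of_deriv_nonneg (convex_Icc 0 r)
      (Continuous.continuousOn (by
        exact continuous_iff_continuousAt.2 fun t => (hf t).continuousAt))
      (fun t ht => (hf t).differentiableAt.differentiableWithinAt)
    intro t ht
    rw [interior_Icc] at ht
    rw [(hf t).deriv]
    exact hf' t ht
  calc (0:ℝ) ≤ f 0 := h0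
    _ ≤ f x := hmono (left_mem_Icc.2 (hx.1.trans hx.2)) hx hx.1

lemma aux_sinh_lt {x : ℝ} (hx : 0 < x) : Real.sinh x < x * Real.cosh x := by
  have hd : ∀ t : ℝ, HasDerivAt (fun t => t * Real.cosh t - Real.sinh t) (t * Real.sinh t) t := by
    intro t
    have h := ((hasDerivAt_id t).mul (Real.hasDerivAt_cosh t)).sub (Real.hasDerivAt_sinh t)
    exact h.congr_deriv (by simp)
  have hmono : StrictMonoOn (fun t => t * Real.cosh t - Real.sinh t) (Ici (0:ℝ)) := by
    apply strictMonoOn_of_deriv_pos (convex_Ici 0)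
      (Continuous.continuousOn (continuous_iff_continuousAt.2 fun t => (hd t).continuousAt))
    intro t ht
    rw [interior_Ici] at ht
    rw [(hd t).deriv]
    exact mul_pos ht (Real.sinh_pos_iff.2 ht)
  have := hmono (by simp : (0:ℝ) ∈ Ici (0:ℝ)) (mem_Ici.2 hx.le) hx
  simp at this
  linarith

lemma aux_sinh_le {x : ℝ} (hx : 0 ≤ x) : Real.sinh x ≤ x * Real.cosh x := by
  rcases eq_or_lt_of_le hx with h | h
  · simp [← h]
  · exact (aux_sinh_lt h).le

/-- x cosh x - sinh x ≤ x³ cosh x on [0,1] -/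
lemma aux_ub {x : ℝ} (hx : x ∈ Icc (0:ℝ) 1) :
    x * Real.cosh x - Real.sinh x ≤ x ^ 3 * Real.cosh x := by
  have hd : ∀ t : ℝ, HasDerivAt (fun t => t ^ 3 * Real.cosh t - (t * Real.cosh t - Real.sinh t))
      (3 * t ^ 2 * Real.cosh t + t ^ 3 * Real.sinh t - t * Real.sinh t) t := by
    intro t
    have h1 := (hasDerivAt_pow 3 t).mul (Real.hasDerivAt_cosh t)
    have h2 := ((hasDerivAt_id t).mul (Real.hasDerivAt_cosh t)).sub (Real.hasDerivAt_sinh t)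
    exact (h1.sub h2).congr_deriv (by simp)
  have := aux_nonneg_of_deriv hd (by norm_num) (r := 1) ?_ x hx
  · linarith [this]
  · intro t ht
    have hc : 0 < Real.cosh t := Real.cosh_pos t
    have hs : Real.sinh t ≤ t * Real.cosh t := aux_sinh_le ht.1.le
    have hs0 : 0 ≤ Real.sinh t := Real.sinh_nonneg_iff.2 ht.1.le
    nlinarith [mul_nonneg ht.1.le (sub_nonneg.2 hs), mul_nonneg (pow_nonneg ht.1.le 3) hs0, mul_pos (mul_pos ht.1 ht.1) hc]

/-- N x := sinh x + x² sinh x/3 - x cosh x  ≤ x⁴ sinh x on [0,1] -/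
lemma aux_N_le {x : ℝ} (hx : x ∈ Icc (0:ℝ) 1) :
    Real.sinh x + x ^ 2 * Real.sinh x / 3 - x * Real.cosh x ≤ x ^ 4 * Real.sinh x := by
  have hd : ∀ t : ℝ, HasDerivAt
      (fun t => t ^ 4 * Real.sinh t - (Real.sinh t + t ^ 2 * Real.sinh t / 3 - t * Real.cosh t))
      (4 * t ^ 3 * Real.sinh t + t ^ 4 * Real.cosh t -
        (t ^ 2 * Real.cosh t / 3 - t * Real.sinh t / 3)) t := by
    intro t
    have h1 := (hasDerivAt_pow 4 t).mul (Real.hasDerivAt_sinh t)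
    have h2 := ((hasDerivAt_pow 2 t).mul (Real.hasDerivAt_sinh t)).div_const 3
    have h3 := (hasDerivAt_id t).mul (Real.hasDerivAt_cosh t)
    have h4 := ((Real.hasDerivAt_sinh t).add h2).sub h3
    exact (h1.sub h4).congr_deriv (by simp; ring)
  have := aux_nonneg_of_deriv hd (by norm_num) (r := 1) ?_ x hx
  · linarith [this]
  · intro t ht
    have hc : 0 < Real.cosh t := Real.cosh_pos t
    have hub : t * Real.cosh t - Real.sinh t ≤ t ^ 3 * Real.cosh t :=
      aux_ub ⟨ht.1.le, ht.2.le⟩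
    have hs0 : 0 ≤ Real.sinh t := Real.sinh_nonneg_iff.2 ht.1.le
    nlinarith [mul_nonneg ht.1.le (sub_nonneg.2 (hub)), mul_nonneg (mul_nonneg ht.1.le (pow_nonneg ht.1.le 2)) hs0, mul_nonneg (pow_nonneg ht.1.le 4) hc.le, mul_nonneg (pow_nonneg ht.1.le 3) hs0]

lemma P0_pos {x : ℝ} (hx : 0 < x) : 0 < P0 x := by
  have hs : 0 < Real.sinh x := Real.sinh_pos_iff.2 hx
  have h := aux_sinh_lt hx
  have hnum : 0 < x * (Real.cosh x / Real.sinh x) - 1 := by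
    have h2 : (1:ℝ) < x * Real.cosh x / Real.sinh x := by
      rw [lt_div_iff₀ hs]; linarith
    rw [mul_div_assoc] at h2
    linarith
  exact div_pos hnum (by positivity)

lemma P0_ge {x : ℝ} (hx : 0 < x) (hx1 : x ≤ 1) : 1 / 3 - x ^ 2 ≤ P0 x := by
  have hs : 0 < Real.sinh x := Real.sinh_pos_iff.2 hx
  have hN := aux_N_le ⟨hx.le, hx1⟩
  have key : (1 / 3 - x ^ 2) * x ^ 2 * Real.sinh x ≤ x * Real.cosh x - Real.sinh x := by
    nlinarith [hN]
  rw [P0, le_div_iff₀ (by positivity : (0:ℝ) < x ^ 2)]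
  have heq : x * (Real.cosh x / Real.sinh x) - 1
      = (x * Real.cosh x - Real.sinh x) / Real.sinh x := by
    field_simp
  rw [heq, le_div_iff₀ hs]
  linarith [key]

lemma P0_le_two_div {x : ℝ} (hx : 1 ≤ x) : P0 x ≤ 2 / x := by
  have hx0 : 0 < x := lt_of_lt_of_le one_pos hx
  have hs : 0 < Real.sinh x := Real.sinh_pos_iff.2 hx0
  have hch : Real.cosh x ≤ 2 * Real.sinh x := by
    rw [Real.cosh_eq, Real.sinh_eq]
    have h1 : (3:ℝ) ≤ Real.exp (2 * x) := by
      have := Real.add_one_le_exp (2 * x)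
      linarith
    have h2 : Real.exp (2 * x) = Real.exp x * Real.exp x := by
      rw [← Real.exp_add]; ring_nf
    have h3 : Real.exp (-x) * Real.exp x = 1 := by
      rw [← Real.exp_add]; simp
    have h4 := Real.exp_pos x
    have h5 := Real.exp_pos (-x)
    nlinarith
  have hnum : x * (Real.cosh x / Real.sinh x) - 1 ≤ 2 * x := by
    have : Real.cosh x / Real.sinh x ≤ 2 := by
      rw [div_le_iff₀ hs]; linarith
    nlinarith
  rw [P0]
  rw [div_le_div_iff₀ (by positivity) hx0]
  calc (x * (Real.cosh x / Real.sinh x) - 1) * x ≤ 2 * x * x := by nlinarith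
    _ = 2 * x ^ 2 := by ring


lemma psi_contDiff : ContDiff ℝ 1 (fun y : ℝ => P0 (Real.exp y)) := by
  have h : ∀ y : ℝ, Real.sinh (Real.exp y) ≠ 0 :=
    fun y => ne_of_gt (Real.sinh_pos_iff.2 (Real.exp_pos y))
  unfold P0
  apply ContDiff.div
  · apply ContDiff.sub
    · exact (Real.contDiff_exp.of_le le_top).mul
        (((Real.contDiff_cosh.of_le le_top).comp (Real.contDiff_exp.of_le le_top)).div
          ((Real.contDiff_sinh.of_le le_top).comp (Real.contDiff_exp.of_le le_top)) h)
    · exact contDiff_const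
  · exact (Real.contDiff_exp.of_le le_top).pow 2
  · intro y
    positivity

lemma psi_lipschitzOnWith {s : Set ℝ} (hs : Convex ℝ s) (hcomp : IsCompact s) :
    ∃ K : NNReal, LipschitzOnWith K (fun y : ℝ => P0 (Real.exp y)) s := by
  set ψ := fun y : ℝ => P0 (Real.exp y)
  have hdiff : Differentiable ℝ ψ := psi_contDiff.differentiable one_ne_zero
  have hdc : Continuous (deriv ψ) := psi_contDiff.continuous_deriv le_rfl
  obtain ⟨C, hC⟩ := hcomp.exists_bound_of_continuousOn hdc.continuousOn
  refine ⟨C.toNNReal, ?_⟩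
  apply hs.lipschitzOnWith_of_nnnorm_hasDerivWithin_le
    (f' := deriv ψ) (fun x hx => (hdiff x).hasDerivAt.hasDerivWithinAt)
  intro x hx
  have := hC x hx
  rw [← NNReal.coe_le_coe, coe_nnnorm, Real.coe_toNNReal']
  rw [Real.norm_eq_abs]
  exact le_max_of_le_left this


theorem exists_periodic_solution
    (T : ℝ) (hT : 0 < T) (Φ : ℝ → ℝ) (hΦc : Continuous Φ)
    (hΦpos : ∀ t, 0 < Φ t) (hΦper : ∀ t, Φ (t + T) = Φ t)
    (μ σ : ℝ) (hμ : 0 < μ) (hσ : 0 < σ)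
    (hσlt : σ < (1 / T) * ∫ t in (0 : ℝ)..T, Φ t) :
    ∃ R : ℝ → ℝ, (∀ t, 0 ≤ t → 0 < R t) ∧
      (∀ t, 0 ≤ t → HasDerivAt R (μ * R t * (Φ t * P0 (R t) - σ / 3)) t) ∧
      R 0 = R T := by
  have hper : Function.Periodic Φ T := hΦper
  -- the maximum of Φ
  obtain ⟨tM, htM, hmax⟩ := isCompact_Icc.exists_isMaxOn (nonempty_Icc.2 hT.le)
    hΦc.continuousOn
  set M := Φ tM with hMdef
  have hMpos : 0 < M := hΦpos tM
  have hΦleM : ∀ t, Φ t ≤ M := by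
    intro t
    obtain ⟨y, hy, hyEq⟩ := hper.exists_mem_Ico₀ hT t
    rw [hyEq]; exact hmax (Ico_subset_Icc_self hy)
  -- the mean of Φ
  set Φbar := (1 / T) * ∫ t in (0:ℝ)..T, Φ t with hΦbardef
  have hΦint : IntervalIntegrable Φ MeasureTheory.volume 0 T := hΦc.intervalIntegrable 0 T
  have hbarpos : 0 < Φbar := hσ.trans hσlt
  have hintegralΦ : ∫ t in (0:ℝ)..T, Φ t = T * Φbar := by
    rw [hΦbardef]; field_simp
  have hbarleM : Φbar ≤ M := by
    have h1 : ∫ t in (0:ℝ)..T, Φ t ≤ T * M := by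
      calc ∫ t in (0:ℝ)..T, Φ t ≤ ∫ _t in (0:ℝ)..T, M :=
            intervalIntegral.integral_mono_on hT.le hΦint intervalIntegrable_const
              (fun x _ => hΦleM x)
        _ = T * M := by simp [smul_eq_mul]
    rw [hΦbardef]
    rw [div_mul_eq_mul_div, one_mul, div_le_iff₀ hT] at *
    linarith [h1]
  -- key constants
  have hεlt : σ / (3 * Φbar) < 1 / 3 := by
    rw [div_lt_iff₀ (by positivity)]
    calc σ < Φbar := hσlt
      _ = 1 / 3 * (3 * Φbar) := by ring
  set xc := min 1 (Real.sqrt (1 / 3 - σ / (3 * Φbar))) with hxcdef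
  have hxcpos : 0 < xc := by
    apply lt_min one_pos
    apply Real.sqrt_pos.2
    linarith
  have hxc1 : xc ≤ 1 := min_le_left _ _
  have hPc : ∀ x : ℝ, 0 < x → x ≤ xc → σ / (3 * Φbar) ≤ P0 x := by
    intro x hx hxle
    have h1 : x ^ 2 ≤ 1 / 3 - σ / (3 * Φbar) := by
      have h2 : x ≤ Real.sqrt (1 / 3 - σ / (3 * Φbar)) := hxle.trans (min_le_right _ _)
      calc x ^ 2 ≤ Real.sqrt (1 / 3 - σ / (3 * Φbar)) ^ 2 := by
            apply pow_le_pow_left₀ hx.le h2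
        _ = 1 / 3 - σ / (3 * Φbar) := Real.sq_sqrt (by linarith)
    have := P0_ge hx (hxle.trans hxc1)
    linarith
  set xb := max (max 1 xc) (6 * M / σ + 1) with hxbdef
  have hxb1 : 1 ≤ xb := le_max_of_le_left (le_max_left _ _)
  have hxbpos : 0 < xb := lt_of_lt_of_le one_pos hxb1
  have hxbc : xc ≤ xb := le_max_of_le_left (le_max_right _ _)
  have hPb : P0 xb < σ / (3 * M) := by
    have h1 : 6 * M / σ < xb := by
      have := le_max_right (max 1 xc) (6 * M / σ + 1)
      linarith
    have h2 : P0 xb ≤ 2 / xb := P0_le_two_div hxb1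
    have h3 : 2 / xb < σ / (3 * M) := by
      rw [div_lt_div_iff₀ hxbpos (by positivity)]
      have h4 : 0 < σ := hσ
      rw [div_lt_iff₀ h4] at h1
      nlinarith
    linarith
  -- the interval [a', b] and the modified vector field
  set c := Real.log xc with hcdef
  set b := Real.log xb with hbdef
  set a := c - μ * σ * T / 3 with hadef
  set a' := a - μ * σ * T / 3 with ha'def
  have hcb : c ≤ b := Real.log_le_log hxcpos hxbc
  have hac : a ≤ c := by rw [hadef]; nlinarith [mul_pos (mul_pos hμ hσ) hT]
  have ha'a : a' ≤ a := by rw [ha'def]; nlinarith [mul_pos (mul_pos hμ hσ) hT]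
  have hab : a ≤ b := hac.trans hcb
  have ha'b : a' ≤ b := ha'a.trans hab
  have hexpc : Real.exp c = xc := Real.exp_log hxcpos
  have hexpb : Real.exp b = xb := Real.exp_log hxbpos
  set ψ : ℝ → ℝ := fun y => P0 (Real.exp y) with hψdef
  set pr : ℝ → ℝ := fun y => max a' (min b y) with hprdef
  set g : ℝ → ℝ := fun y => ψ (pr y) with hgdef
  set v : ℝ → ℝ → ℝ := fun t y => μ * (Φ t * g y) - μ * σ / 3 with hvdef
  have hprmem : ∀ y, pr y ∈ Icc a' b := by
    intro y
    constructor
    · exact le_max_left _ _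
    · exact max_le ha'b (min_le_left _ _)
  have hprid : ∀ y ∈ Icc a' b, pr y = y := by
    intro y hy
    rw [hprdef]
    simp only
    rw [min_eq_right hy.2, max_eq_right hy.1]
  have hψcont : Continuous ψ := psi_contDiff.continuous
  have hprcont : Continuous pr := continuous_const.max (continuous_const.min continuous_id)
  have hprlip : LipschitzWith 1 pr := by
    apply LipschitzWith.of_dist_le_mul
    intro x y
    rw [NNReal.coe_one, one_mul, Real.dist_eq, Real.dist_eq, hprdef]
    simp only
    have h1 : |max a' (min b x) - max a' (min b y)| ≤ |min b x - min b y| := by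
      rw [max_comm a' (min b x), max_comm a' (min b y)]
      exact abs_max_sub_max_le_abs _ _ _
    have h2 : |min b x - min b y| ≤ |x - y| := by
      have h := abs_min_sub_min_le_max b x b y
      rwa [sub_self, abs_zero, max_eq_right (abs_nonneg _)] at h
    exact h1.trans h2
  have hgcont : Continuous g := hψcont.comp hprcont
  obtain ⟨K₀, hK₀⟩ := psi_lipschitzOnWith (convex_Icc a' b) isCompact_Icc
  have hglip : LipschitzWith K₀ g := by
    apply LipschitzWith.of_dist_le_mul
    intro x y
    calc dist (g x) (g y) ≤ K₀ * dist (pr x) (pr y) :=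
          hK₀.dist_le_mul _ (hprmem x) _ (hprmem y)
      _ ≤ K₀ * dist x y := by
          have h5 := hprlip.dist_le_mul x y
          rw [NNReal.coe_one, one_mul] at h5
          exact mul_le_mul_of_nonneg_left h5 K₀.coe_nonneg
  have hgpos : ∀ y, 0 < g y := fun y => P0_pos (Real.exp_pos _)
  -- uniform bound on g
  obtain ⟨tG, _, hGmax⟩ := isCompact_Icc.exists_isMaxOn (nonempty_Icc.2 ha'b)
    hψcont.continuousOn
  set Gmax := ψ tG with hGdef
  have hgle : ∀ y, g y ≤ Gmax := fun y => hGmax (hprmem y)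
  have hGpos : 0 < Gmax := lt_of_lt_of_le (hgpos 0) (hgle 0)
  -- Lipschitz and bound for v
  set L : NNReal := Real.toNNReal (μ * M) * K₀ with hLdef
  have hvlip : ∀ t, LipschitzWith L (v t) := by
    intro t
    apply LipschitzWith.of_dist_le_mul
    intro x y
    rw [hvdef]
    simp only
    rw [Real.dist_eq, Real.dist_eq]
    have h1 : μ * (Φ t * g x) - μ * σ / 3 - (μ * (Φ t * g y) - μ * σ / 3)
        = μ * Φ t * (g x - g y) := by ring
    rw [h1, abs_mul]
    have h2 : |μ * Φ t| = μ * Φ t := abs_of_pos (mul_pos hμ (hΦpos t))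
    rw [h2]
    have h3 : |g x - g y| ≤ K₀ * |x - y| := by
      have := hglip.dist_le_mul x y
      rwa [Real.dist_eq, Real.dist_eq] at this
    have h4 : (L : ℝ) = max (μ * M) 0 * K₀ := by
      rw [hLdef]; push_cast; rw [Real.coe_toNNReal']
    rw [h4]
    have h5 : μ * Φ t ≤ max (μ * M) 0 := le_max_of_le_left
      (by nlinarith [hΦleM t, (hΦpos t).le])
    calc μ * Φ t * |g x - g y| ≤ μ * Φ t * ((K₀ : ℝ) * |x - y|) :=
          mul_le_mul_of_nonneg_left h3 (mul_nonneg hμ.le (hΦpos t).le)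
      _ ≤ max (μ * M) 0 * ((K₀ : ℝ) * |x - y|) := by
          apply mul_le_mul_of_nonneg_right h5
          exact mul_nonneg K₀.coe_nonneg (abs_nonneg _)
      _ = max (μ * M) 0 * (K₀ : ℝ) * |x - y| := by ring
  set Cb := μ * M * Gmax + μ * σ / 3 with hCbdef
  have hCbpos : 0 < Cb := by
    have := mul_pos (mul_pos hμ hMpos) hGpos
    have := mul_pos hμ hσ
    rw [hCbdef]; nlinarith
  have hvbound : ∀ t y, |v t y| ≤ Cb := by
    intro t y
    rw [hvdef]; simp only
    rw [abs_le]
    constructor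
    · have := mul_nonneg (mul_nonneg hμ.le (hΦpos t).le) (hgpos y).le
      rw [hCbdef]; nlinarith [mul_pos hMpos hGpos]
    · have h1 : Φ t * g y ≤ M * Gmax := by
        nlinarith [hΦleM t, hgle y, (hgpos y).le, (hΦpos t).le, hMpos]
      rw [hCbdef]; nlinarith
  have hvlow : ∀ t y, -(μ * σ / 3) ≤ v t y := by
    intro t y
    rw [hvdef]; simp only
    nlinarith [mul_nonneg (mul_nonneg hμ.le (hΦpos t).le) (hgpos y).le]
  have hvcont : ∀ y, Continuous fun t => v t y :=
    fun y => ((continuous_const.mul (hΦc.mul continuous_const)).sub continuous_const)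
  -- existence of solutions
  have hexist : ∀ y₀ : ℝ, ∃ y : ℝ → ℝ, y 0 = y₀ ∧
      ∀ t ∈ Icc (0:ℝ) T, HasDerivWithinAt y (v t (y t)) (Icc (0:ℝ) T) t := by
    intro y₀
    have hpl : IsPicardLindelof v (tmin := 0) (tmax := T) ⟨0, left_mem_Icc.2 hT.le⟩ y₀
        (Cb * T).toNNReal 0 Cb.toNNReal L :=
      { lipschitzOnWith := fun t _ => (hvlip t).lipschitzOnWith
        continuousOn := fun x _ => (hvcont x).continuousOn
        norm_le := fun t _ x _ => by
          rw [Real.norm_eq_abs, Real.coe_toNNReal _ hCbpos.le]; exact hvbound t x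
        mul_max_le := by
          simp [Real.coe_toNNReal _ hCbpos.le, Real.coe_toNNReal _ (mul_pos hCbpos hT).le, hT.le] }
    exact hpl.exists_eq_forall_mem_Icc_hasDerivWithinAt₀
  -- basic facts about solutions
  have hcontOn : ∀ (y : ℝ → ℝ),
      (∀ t ∈ Icc (0:ℝ) T, HasDerivWithinAt y (v t (y t)) (Icc (0:ℝ) T) t) →
      ContinuousOn y (Icc 0 T) := fun y hy t ht => (hy t ht).continuousWithinAt
  have hIci : ∀ (y : ℝ → ℝ),
      (∀ t ∈ Icc (0:ℝ) T, HasDerivWithinAt y (v t (y t)) (Icc (0:ℝ) T) t) →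
      ∀ t ∈ Ico (0:ℝ) T, HasDerivWithinAt y (v t (y t)) (Ici t) t := by
    intro y hy t ht
    apply (hy t (Ico_subset_Icc_self ht)).mono_of_mem_nhdsWithin
    rw [mem_nhdsWithin]
    exact ⟨Iio T, isOpen_Iio, ht.2, fun u hu => ⟨le_trans ht.1 hu.2, le_of_lt hu.1⟩⟩
  have hvcomp : ∀ (y : ℝ → ℝ) (t₁ t₂ : ℝ), ContinuousOn y (Icc t₁ t₂) →
      ContinuousOn (fun s => v s (y s)) (Icc t₁ t₂) := by
    intro y t₁ t₂ hc
    rw [hvdef]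
    simp only
    apply ContinuousOn.sub ?_ continuousOn_const
    exact continuousOn_const.mul (hΦc.continuousOn.mul (hgcont.comp_continuousOn hc))
  have hkey_int : ∀ (y : ℝ → ℝ),
      (∀ t ∈ Icc (0:ℝ) T, HasDerivWithinAt y (v t (y t)) (Icc (0:ℝ) T) t) →
      ∀ t₁ t₂, 0 ≤ t₁ → t₁ ≤ t₂ → t₂ ≤ T →
      y t₂ - y t₁ = ∫ s in t₁..t₂, v s (y s) := by
    intro y hy t₁ t₂ h0 h12 h2T
    have hsub : Icc t₁ t₂ ⊆ Icc 0 T := Icc_subset_Icc h0 h2T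
    have hcont : ContinuousOn y (Icc t₁ t₂) := (hcontOn y hy).mono hsub
    refine (intervalIntegral.integral_eq_sub_of_hasDeriv_right_of_le h12 hcont ?_
      (((hvcomp y t₁ t₂ hcont).intervalIntegrable_of_Icc h12))).symm
    intro x hx
    apply (hy x (hsub ⟨hx.1.le, hx.2.le⟩)).mono_of_mem_nhdsWithin
    rw [mem_nhdsWithin]
    refine ⟨Iio T, isOpen_Iio, lt_of_lt_of_le hx.2 h2T, fun u hu => ?_⟩
    exact ⟨le_trans (h0.trans hx.1.le) hu.2.le, le_of_lt hu.1⟩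
  have hcrude : ∀ (y : ℝ → ℝ),
      (∀ t ∈ Icc (0:ℝ) T, HasDerivWithinAt y (v t (y t)) (Icc (0:ℝ) T) t) →
      ∀ t₁ t₂, 0 ≤ t₁ → t₁ ≤ t₂ → t₂ ≤ T →
      y t₁ - μ * σ / 3 * (t₂ - t₁) ≤ y t₂ := by
    intro y hy t₁ t₂ h0 h12 h2T
    have h1 := hkey_int y hy t₁ t₂ h0 h12 h2T
    have hsub : Icc t₁ t₂ ⊆ Icc 0 T := Icc_subset_Icc h0 h2T
    have hcont : ContinuousOn y (Icc t₁ t₂) := (hcontOn y hy).mono hsub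
    have h2 : ∫ _s in t₁..t₂, (-(μ * σ / 3)) ≤ ∫ s in t₁..t₂, v s (y s) := by
      apply intervalIntegral.integral_mono_on h12 intervalIntegrable_const
        ((hvcomp y t₁ t₂ hcont).intervalIntegrable_of_Icc h12)
      exact fun x _ => hvlow x (y x)
    rw [intervalIntegral.integral_const, smul_eq_mul] at h2
    nlinarith [h1, h2]
  have hgb_eq : g b = P0 xb := by
    rw [hgdef]; simp only
    rw [hprid b ⟨ha'b, le_refl b⟩, hψdef]; simp only; rw [hexpb]
  have hupper : ∀ (y : ℝ → ℝ),
      (∀ t ∈ Icc (0:ℝ) T, HasDerivWithinAt y (v t (y t)) (Icc (0:ℝ) T) t) →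
      y 0 ≤ b → ∀ t ∈ Icc (0:ℝ) T, y t ≤ b := by
    intro y hy h0b t ht
    have hbd : ∀ x ∈ Ico (0:ℝ) T, y x = (fun _ => b) x → v x (y x) < (fun _ => (0:ℝ)) x := by
      intro x _ hyx
      simp only at hyx ⊢
      rw [hyx]
      have h1 : Φ x * g b ≤ M * g b := mul_le_mul_of_nonneg_right (hΦleM x) (hgpos b).le
      have h2 : M * g b < M * (σ / (3 * M)) := by
        rw [hgb_eq]; exact mul_lt_mul_of_pos_left hPb hMpos
      have h3 : M * (σ / (3 * M)) = σ / 3 := by field_simp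
      have h4 : Φ x * g b < σ / 3 := by linarith
      have h5 := mul_lt_mul_of_pos_left h4 hμ
      rw [hvdef]; simp only
      linarith
    exact image_le_of_deriv_right_lt_deriv_boundary (f := y) (f' := fun t => v t (y t))
      (hcontOn y hy) (hIci y hy) h0b (fun x => hasDerivAt_const x b) hbd ht
  have hglow : ∀ z : ℝ, z ≤ c → σ / (3 * Φbar) ≤ g z := by
    intro z hz
    have h1 : pr z ≤ c := by
      rw [hprdef]; simp only
      exact max_le (ha'a.trans hac) ((min_le_right b z).trans hz)
    have h2 : Real.exp (pr z) ≤ xc := by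
      rw [← hexpc]
      exact Real.exp_le_exp.2 h1
    exact hPc _ (Real.exp_pos _) h2
  -- main lower bound for the time-T map
  have hlowerT : ∀ (y : ℝ → ℝ),
      (∀ t ∈ Icc (0:ℝ) T, HasDerivWithinAt y (v t (y t)) (Icc (0:ℝ) T) t) →
      a ≤ y 0 → a ≤ y T := by
    intro y hy h0a
    by_cases hcase : ∀ t ∈ Icc (0:ℝ) T, y t ≤ c
    · -- integral comparison gives y T ≥ y 0
      have h1 := hkey_int y hy 0 T le_rfl hT.le le_rfl
      have hcont : ContinuousOn y (Icc 0 T) := hcontOn y hy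
      have h2 : ∫ s in (0:ℝ)..T, (μ * (Φ s * (σ / (3 * Φbar))) - μ * σ / 3)
          ≤ ∫ s in (0:ℝ)..T, v s (y s) := by
        apply intervalIntegral.integral_mono_on hT.le ?_
          ((hvcomp y 0 T hcont).intervalIntegrable_of_Icc hT.le)
        · intro x hx
          rw [hvdef]; simp only
          have h3 : σ / (3 * Φbar) ≤ g (y x) := hglow _ (hcase x hx)
          have h4 : Φ x * (σ / (3 * Φbar)) ≤ Φ x * g (y x) :=
            mul_le_mul_of_nonneg_left h3 (hΦpos x).le
          have h5 := mul_le_mul_of_nonneg_left h4 hμ.le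
          linarith
        · apply ContinuousOn.intervalIntegrable_of_Icc hT.le
          apply ContinuousOn.sub ?_ continuousOn_const
          exact continuousOn_const.mul (hΦc.continuousOn.mul continuousOn_const)
      have h6 : ∫ s in (0:ℝ)..T, (μ * (Φ s * (σ / (3 * Φbar))) - μ * σ / 3)
          = μ * (σ / (3 * Φbar)) * (T * Φbar) - μ * σ / 3 * T := by
        rw [intervalIntegral.integral_sub ?_ intervalIntegrable_const]
        · rw [intervalIntegral.integral_const, smul_eq_mul]
          have h7 : ∀ s : ℝ, μ * (Φ s * (σ / (3 * Φbar))) = μ * (σ / (3 * Φbar)) * Φ s := by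
            intro s; ring
          simp_rw [h7]
          rw [intervalIntegral.integral_const_mul, hintegralΦ]
          ring
        · apply ContinuousOn.intervalIntegrable_of_Icc hT.le
          exact continuousOn_const.mul (hΦc.continuousOn.mul continuousOn_const)
      have h8 : μ * (σ / (3 * Φbar)) * (T * Φbar) - μ * σ / 3 * T = 0 := by
        field_simp
        ring
      rw [h6, h8] at h2
      linarith
    · -- there is a time where y exceeds c
      push_neg at hcase
      obtain ⟨t₀, ht₀, hct₀⟩ := hcase
      set S := Icc (0:ℝ) T ∩ y ⁻¹' Ici c with hSdef
      have hScl : IsClosed S :=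
        (hcontOn y hy).preimage_isClosed_of_isClosed isClosed_Icc isClosed_Ici
      have hScomp : IsCompact S :=
        isCompact_Icc.of_isClosed_subset hScl inter_subset_left
      have hSne : S.Nonempty := ⟨t₀, ht₀, le_of_lt hct₀⟩
      set t₁ := sSup S with ht₁def
      have ht₁S : t₁ ∈ S := hScomp.sSup_mem hSne
      have ht₁Icc : t₁ ∈ Icc (0:ℝ) T := ht₁S.1
      have hyt₁ : c ≤ y t₁ := ht₁S.2
      have h9 := hcrude y hy t₁ T ht₁Icc.1 ht₁Icc.2 le_rfl
      have h10 : μ * σ / 3 * (T - t₁) ≤ μ * σ / 3 * T := by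
        apply mul_le_mul_of_nonneg_left ?_ (by positivity)
        linarith [ht₁Icc.1]
      rw [hadef]
      linarith
  have hlower' : ∀ (y : ℝ → ℝ),
      (∀ t ∈ Icc (0:ℝ) T, HasDerivWithinAt y (v t (y t)) (Icc (0:ℝ) T) t) →
      a ≤ y 0 → ∀ t ∈ Icc (0:ℝ) T, a' ≤ y t := by
    intro y hy h0a t ht
    have h1 := hcrude y hy 0 t le_rfl ht.1 ht.2
    have h2 : μ * σ / 3 * (t - 0) ≤ μ * σ / 3 * T := by
      apply mul_le_mul_of_nonneg_left ?_ (by positivity)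
      linarith [ht.2]
    rw [ha'def]
    linarith
  -- the Poincaré (time-T) map
  choose sol hsol0 hsolD using hexist
  set P : ℝ → ℝ := fun y₀ => sol y₀ T with hPdef
  have hPmaps : ∀ y₀ ∈ Icc a b, P y₀ ∈ Icc a b := by
    intro y₀ hy₀
    constructor
    · exact hlowerT (sol y₀) (hsolD y₀) (by rw [hsol0 y₀]; exact hy₀.1)
    · exact hupper (sol y₀) (hsolD y₀) (by rw [hsol0 y₀]; exact hy₀.2) T (right_mem_Icc.2 hT.le)
  have huniq : ∀ (y z : ℝ → ℝ),
      (∀ t ∈ Icc (0:ℝ) T, HasDerivWithinAt y (v t (y t)) (Icc (0:ℝ) T) t) →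
      (∀ t ∈ Icc (0:ℝ) T, HasDerivWithinAt z (v t (z t)) (Icc (0:ℝ) T) t) →
      ∀ s, 0 ≤ s → s ≤ T → y s = z s → y T = z T := by
    intro y z hy hz s hs0 hsT heq
    have h := ODE_solution_unique (v := v) (K := L) hvlip
      ((hcontOn y hy).mono (Icc_subset_Icc hs0 le_rfl))
      (fun t ht => hIci y hy t ⟨hs0.trans ht.1, ht.2⟩)
      ((hcontOn z hz).mono (Icc_subset_Icc hs0 le_rfl))
      (fun t ht => hIci z hz t ⟨hs0.trans ht.1, ht.2⟩) heq
    exact h (right_mem_Icc.2 hsT)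
  have hPmono : ∀ x z, x ∈ Icc a b → z ∈ Icc a b → x ≤ z → P x ≤ P z := by
    intro x z hx hz hxz
    by_contra hcon
    push_neg at hcon
    set α := sol x with hαdef
    set β := sol z with hβdef
    set E := Icc (0:ℝ) T ∩ (fun t => β t - α t) ⁻¹' (Ici 0) with hEdef
    have hEcl : IsClosed E := by
      apply ContinuousOn.preimage_isClosed_of_isClosed ?_ isClosed_Icc isClosed_Ici
      exact (hcontOn β (hsolD z)).sub (hcontOn α (hsolD x))
    have hEcomp : IsCompact E := isCompact_Icc.of_isClosed_subset hEcl inter_subset_left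
    have hEne : E.Nonempty := by
      refine ⟨0, left_mem_Icc.2 hT.le, ?_⟩
      simp only [mem_preimage, mem_Ici, hsol0 x, hsol0 z]
      rw [hαdef, hβdef, hsol0 x, hsol0 z]
      linarith
    set s₁ := sSup E with hs₁def
    have hs₁E : s₁ ∈ E := hEcomp.sSup_mem hEne
    have hs₁Icc : s₁ ∈ Icc (0:ℝ) T := hs₁E.1
    have hs₁le : α s₁ ≤ β s₁ := by
      have := hs₁E.2
      simp only [mem_preimage, mem_Ici] at this
      linarith
    have hTnotE : ¬ (α T ≤ β T) := by
      intro h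
      exact absurd hcon (not_lt.2 h)
    have hs₁T : s₁ < T := by
      rcases lt_or_eq_of_le hs₁Icc.2 with h | h
      · exact h
      · exfalso; apply hTnotE; rw [← h]; exact hs₁le
    have hs₁eq : α s₁ = β s₁ := by
      rcases lt_or_eq_of_le hs₁le with hlt | heq
      · exfalso
        -- continuity pushes the inequality slightly to the right
        have hcw : ContinuousWithinAt (fun t => β t - α t) (Icc 0 T) s₁ :=
          ((hcontOn β (hsolD z)).sub (hcontOn α (hsolD x))) s₁ hs₁Icc
        have hpos : (0:ℝ) < β s₁ - α s₁ := by linarith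
        have hnb : {t | 0 < β t - α t} ∈ 𝓝[Icc (0:ℝ) T] s₁ :=
          hcw (Ioi_mem_nhds hpos)
        rw [mem_nhdsWithin] at hnb
        obtain ⟨U, hUopen, hUs₁, hUsub⟩ := hnb
        obtain ⟨δ, hδpos, hball⟩ := Metric.isOpen_iff.1 hUopen s₁ hUs₁
        set u := min (s₁ + δ / 2) T with hudef
        have hu1 : s₁ < u := lt_min (by linarith) hs₁T
        have hu2 : u ∈ Icc (0:ℝ) T := ⟨hs₁Icc.1.trans hu1.le, min_le_right _ _⟩
        have hu3 : u ∈ U := by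
          apply hball
          rw [Metric.mem_ball, Real.dist_eq, abs_of_pos (by linarith)]
          have : u ≤ s₁ + δ / 2 := min_le_left _ _
          linarith
        have hu4 : u ∈ E := by
          refine ⟨hu2, ?_⟩
          simp only [mem_preimage, mem_Ici]
          have := hUsub ⟨hu3, hu2⟩
          simp only [mem_setOf_eq] at this
          linarith
        have := le_csSup ⟨T, fun p hp => hp.1.2⟩ hu4
        rw [← hs₁def] at this
        linarith
      · exact heq
    have := huniq α β (hsolD x) (hsolD z) s₁ hs₁Icc.1 hs₁Icc.2 hs₁eq
    rw [hPdef] at hcon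
    simp only at hcon
    rw [← hαdef, ← hβdef] at hcon
    linarith [hcon, this.le, this.ge]
  -- Knaster–Tarski style fixed point
  set E₀ := {x ∈ Icc a b | x ≤ P x} with hE₀def
  have haE₀ : a ∈ E₀ := ⟨left_mem_Icc.2 hab, (hPmaps a (left_mem_Icc.2 hab)).1⟩
  have hE₀ne : E₀.Nonempty := ⟨a, haE₀⟩
  have hE₀bdd : BddAbove E₀ := ⟨b, fun x hx => hx.1.2⟩
  set w := sSup E₀ with hwdef
  have hwmem : w ∈ Icc a b :=
    ⟨le_csSup hE₀bdd haE₀, csSup_le hE₀ne fun x hx => hx.1.2⟩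
  have hwle : w ≤ P w := by
    apply csSup_le hE₀ne
    intro x hx
    exact hx.2.trans (hPmono x w hx.1 hwmem (le_csSup hE₀bdd hx))
  have hPwmem : P w ∈ Icc a b := hPmaps w hwmem
  have hPw : P w = w := by
    apply le_antisymm ?_ hwle
    apply le_csSup hE₀bdd
    exact ⟨hPwmem, hPmono w (P w) hwmem hPwmem hwle⟩
  -- the periodic solution on [0,T]
  set y := sol w with hydef
  have hyD : ∀ t ∈ Icc (0:ℝ) T, HasDerivWithinAt y (v t (y t)) (Icc (0:ℝ) T) t := hsolD w
  have hy0 : y 0 = w := hsol0 w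
  have hyT : y T = w := hPw
  have hymem : ∀ t ∈ Icc (0:ℝ) T, y t ∈ Icc a' b := by
    intro t ht
    refine ⟨hlower' y hyD (by rw [hy0]; exact hwmem.1) t ht,
      hupper y hyD (by rw [hy0]; exact hwmem.2) t ht⟩
  -- the periodic extension
  set Y : ℝ → ℝ := fun t => y (t - (⌊t / T⌋ : ℝ) * T) with hYdef
  have hfrac : ∀ t : ℝ, (t - (⌊t / T⌋ : ℝ) * T) ∈ Ico (0:ℝ) T := by
    intro t
    exact ⟨Int.sub_floor_div_mul_nonneg t hT, Int.sub_floor_div_mul_lt t hT⟩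
  have hfloor : ∀ (k : ℤ) (u : ℝ), u ∈ Ico ((k:ℝ)*T) (((k:ℝ)+1)*T) → ⌊u / T⌋ = k := by
    intro k u hu
    rw [Int.floor_eq_iff]
    constructor
    · rw [le_div_iff₀ hT]; linarith [hu.1]
    · rw [div_lt_iff₀ hT]; push_cast; linarith [hu.2]
  have hYagree : ∀ (k : ℤ) (u : ℝ), u ∈ Ico ((k:ℝ)*T) (((k:ℝ)+1)*T) →
      Y u = y (u - (k:ℝ)*T) := by
    intro k u hu
    rw [hYdef]
    simp only
    rw [hfloor k u hu]
  have hΦshift : ∀ (k : ℤ) (u : ℝ), Φ (u - (k:ℝ)*T) = Φ u := by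
    intro k u
    have h := hper.sub_zsmul_eq (x := u) k
    simpa [zsmul_eq_mul] using h
  have hvshift : ∀ (k : ℤ) (u x : ℝ), v (u - (k:ℝ)*T) x = v u x := by
    intro k u x
    rw [hvdef]
    simp only
    rw [hΦshift]
  have hYderiv : ∀ t : ℝ, HasDerivAt Y (v t (Y t)) t := by
    intro t
    set k := ⌊t / T⌋ with hkdef
    have hsmem : (t - (k:ℝ)*T) ∈ Ico (0:ℝ) T := hfrac t
    have htmem : t ∈ Ico ((k:ℝ)*T) (((k:ℝ)+1)*T) := by
      constructor
      · linarith [hsmem.1]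
      · have := hsmem.2; linarith
    have hYt : Y t = y (t - (k:ℝ)*T) := hYagree k t htmem
    have hvt : v (t - (k:ℝ)*T) (y (t - (k:ℝ)*T)) = v t (Y t) := by
      rw [hYt, hvshift]
    rcases lt_or_eq_of_le hsmem.1 with hspos | hszero
    · -- interior case
      have hder0 : HasDerivWithinAt y (v (t - (k:ℝ)*T) (y (t - (k:ℝ)*T))) (Icc 0 T)
          (t - (k:ℝ)*T) := hyD _ ⟨hsmem.1, hsmem.2.le⟩
      have hder1 : HasDerivAt y (v (t - (k:ℝ)*T) (y (t - (k:ℝ)*T))) (t - (k:ℝ)*T) :=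
        hder0.hasDerivAt (Icc_mem_nhds hspos hsmem.2)
      have hder2 : HasDerivAt (fun u => y (u - (k:ℝ)*T))
          (v (t - (k:ℝ)*T) (y (t - (k:ℝ)*T))) t := by
        have h := hder1.comp t ((hasDerivAt_id t).sub_const ((k:ℝ)*T))
        simpa [Function.comp_def] using h
      have heq : (fun u => y (u - (k:ℝ)*T)) =ᶠ[𝓝 t] Y := by
        have hopen : Ioo ((k:ℝ)*T) (((k:ℝ)+1)*T) ∈ 𝓝 t :=
          Ioo_mem_nhds (by linarith [hspos]) htmem.2
        filter_upwards [hopen] with u hu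
        exact (hYagree k u ⟨hu.1.le, hu.2⟩).symm
      have := hder2.congr_of_eventuallyEq heq.symm
      rwa [hvt] at this
    · -- boundary case : t = k*T
      have ht_eq : t = (k:ℝ)*T := by linarith [hszero]
      have hyd0 : HasDerivWithinAt y (v 0 (y 0)) (Icc 0 T) 0 := hyD 0 (left_mem_Icc.2 hT.le)
      have hydT : HasDerivWithinAt y (v T (y T)) (Icc 0 T) T := hyD T (right_mem_Icc.2 hT.le)
      have hΦT0 : Φ T = Φ 0 := by simpa using hΦper 0
      have hy0T : y T = y 0 := by rw [hy0, hyT]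
      have hvT0 : v T (y T) = v 0 (y 0) := by
        rw [hy0T, hvdef]
        simp only
        rw [hΦT0]
      -- right piece
      have hR : HasDerivWithinAt Y (v 0 (y 0)) (Ici t) t := by
        have hf : HasDerivWithinAt (fun u : ℝ => u - (k:ℝ)*T) 1
            (Icc ((k:ℝ)*T) ((k:ℝ)*T + T)) t := ((hasDerivAt_id t).sub_const _).hasDerivWithinAt
        have hmaps : MapsTo (fun u : ℝ => u - (k:ℝ)*T)
            (Icc ((k:ℝ)*T) ((k:ℝ)*T + T)) (Icc 0 T) := by
          intro u hu
          simp only [mem_Icc] at hu ⊢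
          constructor <;> linarith [hu.1, hu.2]
        have hyd0' : HasDerivWithinAt y (v 0 (y 0)) (Icc 0 T) (t - (k:ℝ)*T) := by
          rw [← hszero]; exact hyd0
        have hcomp := hyd0'.comp t hf hmaps
        have hcomp' : HasDerivWithinAt (fun u => y (u - (k:ℝ)*T)) (v 0 (y 0))
            (Icc ((k:ℝ)*T) ((k:ℝ)*T + T)) t := by simpa [Function.comp_def] using hcomp
        have hmem : Icc ((k:ℝ)*T) ((k:ℝ)*T + T) ∈ 𝓝[Ici t] t := by
          rw [mem_nhdsWithin]
          refine ⟨Iio ((k:ℝ)*T + T), isOpen_Iio, mem_Iio.2 (by rw [ht_eq]; linarith), fun u hu => ?_⟩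
          simp only [mem_inter_iff, mem_Iio, mem_Ici] at hu
          simp only [mem_Icc]
          rw [ht_eq] at hu
          exact ⟨by linarith [hu.2], hu.1.le⟩
        have hmono := hcomp'.mono_of_mem_nhdsWithin hmem
        apply hmono.congr_of_eventuallyEq ?_ hYt
        have hmem' : Ico ((k:ℝ)*T) (((k:ℝ)+1)*T) ∈ 𝓝[Ici t] t := by
          rw [mem_nhdsWithin]
          refine ⟨Iio (((k:ℝ)+1)*T), isOpen_Iio, mem_Iio.2 (by rw [ht_eq, show ((k:ℝ)+1)*T = (k:ℝ)*T + T from by ring]; linarith), fun u hu => ?_⟩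
          simp only [mem_inter_iff, mem_Iio, mem_Ici] at hu
          simp only [mem_Ico]
          rw [ht_eq] at hu
          exact ⟨by linarith [hu.2], hu.1⟩
        filter_upwards [hmem'] with u hu
        exact hYagree k u hu
      -- left piece
      have hL : HasDerivWithinAt Y (v 0 (y 0)) (Iic t) t := by
        have hf : HasDerivWithinAt (fun u : ℝ => u - ((k:ℝ)-1)*T) 1
            (Icc (((k:ℝ)-1)*T) (((k:ℝ)-1)*T + T)) t :=
          ((hasDerivAt_id t).sub_const _).hasDerivWithinAt
        have hmaps : MapsTo (fun u : ℝ => u - ((k:ℝ)-1)*T)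
            (Icc (((k:ℝ)-1)*T) (((k:ℝ)-1)*T + T)) (Icc 0 T) := by
          intro u hu
          simp only [mem_Icc] at hu ⊢
          constructor <;> linarith [hu.1, hu.2]
        have htT : t - ((k:ℝ)-1)*T = T := by rw [ht_eq]; ring
        have hydT' : HasDerivWithinAt y (v 0 (y 0)) (Icc 0 T) (t - ((k:ℝ)-1)*T) := by
          rw [htT, ← hvT0]; exact hydT
        have hcomp := hydT'.comp t hf hmaps
        have hcomp' : HasDerivWithinAt (fun u => y (u - ((k:ℝ)-1)*T)) (v 0 (y 0))
            (Icc (((k:ℝ)-1)*T) (((k:ℝ)-1)*T + T)) t := by simpa [Function.comp_def] using hcomp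
        have hmem : Icc (((k:ℝ)-1)*T) (((k:ℝ)-1)*T + T) ∈ 𝓝[Iic t] t := by
          rw [mem_nhdsWithin]
          refine ⟨Ioi (((k:ℝ)-1)*T), isOpen_Ioi, mem_Ioi.2 (by rw [ht_eq, show ((k:ℝ)-1)*T = (k:ℝ)*T - T from by ring]; linarith),
            fun u hu => ?_⟩
          simp only [mem_inter_iff, mem_Ioi, mem_Iic] at hu
          simp only [mem_Icc]
          rw [ht_eq] at hu
          exact ⟨hu.1.le, by linarith [hu.2]⟩
        have hmono := hcomp'.mono_of_mem_nhdsWithin hmem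
        have hYtL : Y t = y (t - ((k:ℝ)-1)*T) := by
          rw [hYt, ← hszero, htT, hy0T]
        apply hmono.congr_of_eventuallyEq ?_ hYtL
        have hmem' : (Ioi (((k:ℝ)-1)*T) ∩ Iic t) ∈ 𝓝[Iic t] t := by
          rw [mem_nhdsWithin]
          exact ⟨Ioi (((k:ℝ)-1)*T), isOpen_Ioi, mem_Ioi.2 (by rw [ht_eq, show ((k:ℝ)-1)*T = (k:ℝ)*T - T from by ring]; linarith),
            fun u hu => hu⟩
        filter_upwards [hmem'] with u hu
        simp only [mem_inter_iff, mem_Ioi, mem_Iic] at hu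
        rcases lt_or_eq_of_le hu.2 with hult | hueq
        · have hcast : ((k - 1 : ℤ) : ℝ) = (k:ℝ) - 1 := by push_cast; ring
          have := hYagree (k - 1) u (by
            rw [hcast]
            simp only [mem_Ico]
            constructor
            · exact hu.1.le
            · have : ((k:ℝ) - 1 + 1) * T = (k:ℝ) * T := by ring
              rw [this, ← ht_eq]
              exact hult)
          rw [hcast] at this
          exact this
        · rw [hueq]
          exact hYtL
      have hunion := hL.union hR
      rw [Iic_union_Ici] at hunion
      have hda : HasDerivAt Y (v 0 (y 0)) t := by
        rwa [hasDerivWithinAt_univ] at hunion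
      have hval : v t (Y t) = v 0 (y 0) := by
        rw [hYt, ← hszero, ← hvshift k t (y 0), ← hszero]
      rw [hval]
      exact hda
  -- final assembly
  refine ⟨fun t => Real.exp (Y t), fun t _ => Real.exp_pos _, ?_, ?_⟩
  · intro t _
    have h1 := (hYderiv t).exp
    convert h1 using 1
    have hYmem : Y t ∈ Icc a' b := by
      rw [hYdef]
      exact hymem _ (Ico_subset_Icc_self (hfrac t))
    have hgY : g (Y t) = P0 (Real.exp (Y t)) := by
      rw [hgdef]
      simp only
      rw [hprid _ hYmem, hψdef]
    rw [hvdef]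
    simp only
    rw [hgY]
    ring
  · have h0 : Y 0 = w := by
      have h := hYagree 0 0 (by
        simp only [Int.cast_zero, zero_mul, mem_Ico]
        constructor
        · exact le_rfl
        · simpa using hT)
      simp only [Int.cast_zero, zero_mul, sub_zero] at h
      rw [h, hy0]
    have hTT : Y T = w := by
      have h := hYagree 1 T (by
        simp only [Int.cast_one, one_mul, mem_Ico]
        constructor
        · exact le_rfl
        · rw [show ((1:ℝ)+1)*T = T + T from by ring]; linarith)
      simp only [Int.cast_one, one_mul, sub_self] at h
      rw [h, hy0]
    show Real.exp (Y 0) = Real.exp (Y T)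
    rw [h0, hTT]
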